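/- Let g be a finite-dimensional real nilpotent Lie algebra with an almost complex structure J that is bi-invariant, i.e., J[x,y] = [Jx, y] for all x, y ∈ g. Then J is nilpotent, i.e., the ascending series g₀ᴶ = 0, gᵢᴶ = { X : [X,g] ⊆ g_{i−1}ᴶ, [JX,g] ⊆ g_{i−1}ᴶ } eventually equals g. -/

import Mathlib

section

variable {g : Type*} [LieRing g] [LieAlgebra ℝ g]

/-- One step of the J-ascending series:
`Jstep J S = { X : [X,g] ⊆ S and [JX,g] ⊆ S }`. -/
def Jstep (J : g →ₗ[ℝ] g) (S : Submodule ℝ g) : Submodule ℝ g where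
  carrier := {X | (∀ Y, ⁅X, Y⁆ ∈ S) ∧ (∀ Y, ⁅J X, Y⁆ ∈ S)}
  add_mem' := by
    intro a b ha hb
    refine ⟨fun Y => ?_, fun Y => ?_⟩
    · simpa [add_lie] using S.add_mem (ha.1 Y) (hb.1 Y)
    · simp only [map_add, add_lie]
      exact S.add_mem (ha.2 Y) (hb.2 Y)
  zero_mem' := by
    refine ⟨fun Y => ?_, fun Y => ?_⟩ <;> simp [zero_lie]
  smul_mem' := by
    intro c x hx
    refine ⟨fun Y => ?_, fun Y => ?_⟩
    · simpa [smul_lie] using S.smul_mem c (hx.1 Y)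
    · simp only [map_smul, smul_lie]
      exact S.smul_mem c (hx.2 Y)

/-- The J-ascending series g₀ᴶ = 0, gᵢᴶ = { X : [X,g] ⊆ g_{i−1}ᴶ, [JX,g] ⊆ g_{i−1}ᴶ }. -/
def Jser (J : g →ₗ[ℝ] g) : ℕ → Submodule ℝ g
  | 0 => ⊥
  | i + 1 => Jstep J (Jser J i)

/-- on a finite-dimensional nilpotent real Lie algebra, any bi-invariant
almost complex structure J (J[x,y] = [Jx,y]) is nilpotent: g_kᴶ = g for some k > 0. -/

lemma Jser_inv (J : g →ₗ[ℝ] g) (hJ2 : ∀ x, J (J x) = -x) :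
    ∀ i x, x ∈ Jser J i → J x ∈ Jser J i := by
  intro i
  induction i with
  | zero => intro x hx; simp only [Jser, Submodule.mem_bot] at hx ⊢; simp [hx]
  | succ i ih =>
      intro x hx
      refine ⟨fun Y => hx.2 Y, fun Y => ?_⟩
      rw [hJ2, neg_lie]
      exact (Jser J i).neg_mem (hx.1 Y)

lemma lcs_le_Jser [LieRing.IsNilpotent g]
    (J : g →ₗ[ℝ] g) (hJ2 : ∀ x, J (J x) = -x)
    (hbiinv : ∀ x y : g, J ⁅x, y⁆ = ⁅J x, y⁆) :
    ∀ j i, LieModule.lowerCentralSeries ℝ g g (i + j) = ⊥ →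
      ∀ x, x ∈ LieModule.lowerCentralSeries ℝ g g i → x ∈ Jser J j := by
  intro j
  induction j with
  | zero =>
      intro i h x hx
      rw [Nat.add_zero] at h
      rw [h] at hx
      simpa [Jser] using hx
  | succ j ih =>
      intro i h x hx
      have key : ∀ Y : g, ⁅x, Y⁆ ∈ Jser J j := by
        intro Y
        have h1 : ⁅Y, x⁆ ∈ LieModule.lowerCentralSeries ℝ g g (i + 1) := by
          rw [LieModule.lowerCentralSeries_succ]
          exact LieSubmodule.lie_mem_lie (LieSubmodule.mem_top Y) hx
        have h2 : ⁅x, Y⁆ ∈ LieModule.lowerCentralSeries ℝ g g (i + 1) := by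
          rw [← lie_skew]
          exact (LieModule.lowerCentralSeries ℝ g g (i + 1)).neg_mem h1
        exact ih (i + 1) (by rw [← h]; ring_nf) _ h2
      exact ⟨key, fun Y => by rw [← hbiinv]; exact Jser_inv J hJ2 j _ (key Y)⟩

theorem stmt_3 [FiniteDimensional ℝ g] [LieRing.IsNilpotent g]
    (J : g →ₗ[ℝ] g) (hJ2 : ∀ x, J (J x) = -x)
    (hbiinv : ∀ x y : g, J ⁅x, y⁆ = ⁅J x, y⁆) :
    ∃ k : ℕ, 0 < k ∧ Jser J k = ⊤ := by
  obtain ⟨n, hn⟩ := (LieModule.isNilpotent_iff ℝ g g).mp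
    (inferInstance : LieModule.IsNilpotent g g)
  refine ⟨n + 1, Nat.succ_pos n, ?_⟩
  rw [eq_top_iff]
  intro x _
  refine lcs_le_Jser J hJ2 hbiinv (n + 1) 0 ?_ x ?_
  · have := LieModule.antitone_lowerCentralSeries ℝ g g (Nat.le_succ n)
    rw [hn] at this
    rw [zero_add]
    exact le_bot_iff.mp this
  · simp [LieModule.lowerCentralSeries]


end
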